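/- arXiv:2404.09411 — 2 statements merged into one kernel-verified Lean document; each statement's English description precedes it below -/
import Mathlib

section
/- Let D be an N×N symmetric matrix and F = −JDJ its criterion matrix with eigenvalues λ_i. Then the optimal stress L* = min over Euclidean distance matrices D' of ‖D − D'‖_F² satisfies L* ≥ Σ_{i: λ_i<0} λ_i². -/
open Matrix

/-- The `N × N` all-ones matrix. -/
def onesM (N : ℕ) : Matrix (Fin N) (Fin N) ℝ := Matrix.of fun _ _ => 1

/-- The averaging matrix `P = (1/N) 1_N 1_Nᵀ`. -/
noncomputable def avgM (N : ℕ) : Matrix (Fin N) (Fin N) ℝ := (N : ℝ)⁻¹ • onesM N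

/-- The centering matrix `J = I_N − (1/N) 1_N 1_Nᵀ`. -/
noncomputable def centerM (N : ℕ) : Matrix (Fin N) (Fin N) ℝ := 1 - avgM N

/-- Squared Frobenius norm. -/
def frobSq {N : ℕ} (M : Matrix (Fin N) (Fin N) ℝ) : ℝ := ∑ i, ∑ j, (M i j) ^ 2

/-- `D'` is a Euclidean distance matrix (Gower criterion form): symmetric,
    hollow, entrywise nonnegative, with `−JD'J` positive semidefinite. -/
def IsEDM {N : ℕ} (D' : Matrix (Fin N) (Fin N) ℝ) : Prop :=
  D'.IsSymm ∧ (∀ i, D' i i = 0) ∧ (∀ i j, 0 ≤ D' i j) ∧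
    (-(centerM N * D' * centerM N)).PosSemidef

lemma onesM_mul (N : ℕ) : onesM N * onesM N = (N : ℝ) • onesM N := by
  ext i j; simp [onesM, Matrix.mul_apply]

lemma avgM_mul (N : ℕ) : avgM N * avgM N = avgM N := by
  rcases Nat.eq_zero_or_pos N with h | h
  · subst h; ext i j; exact i.elim0
  · have hN : (N : ℝ) ≠ 0 := Nat.cast_ne_zero.mpr h.ne'
    simp only [avgM, Matrix.smul_mul, Matrix.mul_smul, onesM_mul, smul_smul]
    congr 1
    field_simp

lemma centerM_idem (N : ℕ) : centerM N * centerM N = centerM N := by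
  simp only [centerM, Matrix.mul_sub, Matrix.sub_mul, Matrix.one_mul, Matrix.mul_one, avgM_mul]
  abel

lemma centerM_transpose (N : ℕ) : (centerM N)ᵀ = centerM N := by
  ext i j
  simp only [centerM, avgM, onesM, transpose_apply, Matrix.sub_apply, Matrix.smul_apply, one_apply, of_apply,
    smul_eq_mul, mul_one]
  by_cases h : i = j <;> simp [h, eq_comm]

lemma frobSq_eq_trace {N : ℕ} (A : Matrix (Fin N) (Fin N) ℝ) :
    frobSq A = (Aᵀ * A).trace := by
  simp only [frobSq, Matrix.trace, Matrix.diag, Matrix.mul_apply, transpose_apply, sq]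
  exact Finset.sum_comm

lemma frobSq_nonneg {N : ℕ} (A : Matrix (Fin N) (Fin N) ℝ) : 0 ≤ frobSq A :=
  Finset.sum_nonneg fun _ _ => Finset.sum_nonneg fun _ _ => sq_nonneg _

lemma frobSq_transpose {N : ℕ} (A : Matrix (Fin N) (Fin N) ℝ) : frobSq Aᵀ = frobSq A := by
  simp only [frobSq, transpose_apply]; exact Finset.sum_comm

lemma frobSq_neg {N : ℕ} (A : Matrix (Fin N) (Fin N) ℝ) : frobSq (-A) = frobSq A := by
  simp [frobSq]

lemma frobSq_add_of_cross {N : ℕ} (A B : Matrix (Fin N) (Fin N) ℝ)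
    (h : (Aᵀ * B).trace = 0) : frobSq (A + B) = frobSq A + frobSq B := by
  have hc : ∑ i, ∑ j, A i j * B i j = 0 := by
    rw [show (∑ i, ∑ j, A i j * B i j) = (Aᵀ * B).trace by
      simp only [Matrix.trace, Matrix.diag, Matrix.mul_apply, transpose_apply]
      exact Finset.sum_comm, h]
  have : frobSq (A + B) = frobSq A + frobSq B + 2 * ∑ i, ∑ j, A i j * B i j := by
    simp only [frobSq, Matrix.add_apply, Finset.mul_sum, ← Finset.sum_add_distrib]
    congr 1; ext i; congr 1; ext j; ring
  rw [this, hc]; ring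

lemma frobSq_mul_center_le {N : ℕ} (A : Matrix (Fin N) (Fin N) ℝ) :
    frobSq (A * centerM N) ≤ frobSq A := by
  have hdecomp : A = A * centerM N + A * (1 - centerM N) := by
    rw [Matrix.mul_sub, Matrix.mul_one]; abel
  have hcross : ((A * centerM N)ᵀ * (A * (1 - centerM N))).trace = 0 := by
    rw [transpose_mul, centerM_transpose, Matrix.trace_mul_comm]
    have : A * (1 - centerM N) * (centerM N * Aᵀ) =
        A * ((1 - centerM N) * centerM N) * Aᵀ := by
      simp only [Matrix.mul_assoc]
    rw [this, Matrix.sub_mul, Matrix.one_mul, centerM_idem, sub_self, Matrix.mul_zero,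
      Matrix.zero_mul, Matrix.trace_zero]
  calc frobSq (A * centerM N) ≤ frobSq (A * centerM N) + frobSq (A * (1 - centerM N)) := by
        linarith [frobSq_nonneg (A * (1 - centerM N))]
    _ = frobSq A := by rw [← frobSq_add_of_cross _ _ hcross, ← hdecomp]

lemma frobSq_center_mul_le {N : ℕ} (A : Matrix (Fin N) (Fin N) ℝ) :
    frobSq (centerM N * A) ≤ frobSq A := by
  have : frobSq (centerM N * A) = frobSq (Aᵀ * centerM N) := by
    rw [← frobSq_transpose (centerM N * A), transpose_mul, centerM_transpose]
  rw [this, ← frobSq_transpose A]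
  exact frobSq_mul_center_le Aᵀ

lemma frobSq_unitary_conj {N : ℕ} (U X : Matrix (Fin N) (Fin N) ℝ)
    (hU : Uᵀ * U = 1) :
    frobSq (U * X * Uᵀ) = frobSq X := by
  rw [frobSq_eq_trace, frobSq_eq_trace]
  have : (U * X * Uᵀ)ᵀ * (U * X * Uᵀ) = U * (Xᵀ * X) * Uᵀ := by
    simp only [transpose_mul, transpose_transpose, Matrix.mul_assoc]
    rw [← Matrix.mul_assoc Uᵀ U, hU, Matrix.one_mul]
  rw [this, Matrix.trace_mul_comm, ← Matrix.mul_assoc, hU, Matrix.one_mul]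

lemma frobSq_diag_le {N : ℕ} (A : Matrix (Fin N) (Fin N) ℝ) :
    (∑ i, (A i i) ^ 2) ≤ frobSq A := by
  apply Finset.sum_le_sum
  intro i _
  exact Finset.single_le_sum (fun j _ => sq_nonneg (A i j)) (Finset.mem_univ i)

lemma posSemidef_diag_nonneg {N : ℕ} {A : Matrix (Fin N) (Fin N) ℝ}
    (hA : A.PosSemidef) (i : Fin N) : 0 ≤ A i i := by
  exact hA.diag_nonneg


lemma pos_part_bound {N : ℕ} (F F' : Matrix (Fin N) (Fin N) ℝ)
    (hF : F.IsHermitian) (hF' : F'.PosSemidef) :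
    (∑ i ∈ Finset.univ.filter (fun i => hF.eigenvalues i < 0),
        (hF.eigenvalues i) ^ 2) ≤ frobSq (F' - F) := by
  set U : Matrix (Fin N) (Fin N) ℝ := (hF.eigenvectorUnitary : Matrix (Fin N) (Fin N) ℝ)
    with hUdef
  have hstar : star U = Uᵀ := by
    rw [Matrix.star_eq_conjTranspose, Matrix.conjTranspose_eq_transpose_of_trivial]
  have hU1 : Uᵀ * U = 1 := by
    rw [← hstar]; exact (Matrix.mem_unitaryGroup_iff'.mp hF.eigenvectorUnitary.2)
  have hU2 : U * Uᵀ = 1 := by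
    rw [← hstar]; exact (Matrix.mem_unitaryGroup_iff.mp hF.eigenvectorUnitary.2)
  have hspec : F = U * Matrix.diagonal hF.eigenvalues * Uᵀ := by
    have h := hF.spectral_theorem
    rw [Unitary.conjStarAlgAut_apply, ← hUdef, hstar] at h
    have : Matrix.diagonal (RCLike.ofReal ∘ hF.eigenvalues) = Matrix.diagonal hF.eigenvalues := by
      congr 1
    rwa [this] at h
  set G : Matrix (Fin N) (Fin N) ℝ := Uᵀ * F' * U with hGdef
  have hGpsd : G.PosSemidef := by
    have h := hF'.conjTranspose_mul_mul_same U
    rwa [Matrix.conjTranspose_eq_transpose_of_trivial] at h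
  have hF'eq : F' = U * G * Uᵀ := by
    rw [hGdef]
    calc F' = 1 * F' * 1 := by rw [Matrix.one_mul, Matrix.mul_one]
      _ = (U * Uᵀ) * F' * (U * Uᵀ) := by rw [hU2]
      _ = U * (Uᵀ * F' * U) * Uᵀ := by simp only [Matrix.mul_assoc]
  have h3 : frobSq (F' - F) = frobSq (Matrix.diagonal hF.eigenvalues - G) := by
    have h : U * (G - Matrix.diagonal hF.eigenvalues) * Uᵀ = F' - F := by
      rw [Matrix.mul_sub, Matrix.sub_mul, ← hspec, ← hF'eq]
    rw [← h, frobSq_unitary_conj U _ hU1, ← frobSq_neg, neg_sub]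
  rw [h3]
  have hdiag : ∀ i, (Matrix.diagonal hF.eigenvalues - G) i i = hF.eigenvalues i - G i i := by
    intro i; simp [Matrix.sub_apply]
  calc (∑ i ∈ Finset.univ.filter (fun i => hF.eigenvalues i < 0), (hF.eigenvalues i) ^ 2)
      ≤ ∑ i, ((Matrix.diagonal hF.eigenvalues - G) i i) ^ 2 := by
        rw [← Finset.sum_filter_add_sum_filter_not Finset.univ
          (fun i => hF.eigenvalues i < 0)
          (fun i => ((Matrix.diagonal hF.eigenvalues - G) i i) ^ 2)]
        have hle : (∑ i ∈ Finset.univ.filter (fun i => hF.eigenvalues i < 0),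
            (hF.eigenvalues i) ^ 2) ≤
            ∑ i ∈ Finset.univ.filter (fun i => hF.eigenvalues i < 0),
              ((Matrix.diagonal hF.eigenvalues - G) i i) ^ 2 := by
          apply Finset.sum_le_sum
          intro i hi
          rw [hdiag i]
          have hG := posSemidef_diag_nonneg hGpsd i
          have hlam := (Finset.mem_filter.mp hi).2
          nlinarith
        have hnn : 0 ≤ ∑ i ∈ Finset.univ.filter (fun i => ¬ hF.eigenvalues i < 0),
            ((Matrix.diagonal hF.eigenvalues - G) i i) ^ 2 :=
          Finset.sum_nonneg fun i _ => sq_nonneg _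
        linarith
    _ ≤ frobSq (Matrix.diagonal hF.eigenvalues - G) := frobSq_diag_le _


/-- Lower bound on the optimal stress:
    `L* = inf_{D' EDM} ‖D − D'‖_F² ≥ Σ_{λ_i<0} λ_i²`,
    where the `λ_i` are the eigenvalues of `F = −JDJ`. -/
theorem optimal_stress_lower_bound {N : ℕ} (D : Matrix (Fin N) (Fin N) ℝ)
    (hD : D.IsSymm)
    (hF : (-(centerM N * D * centerM N)).IsHermitian) :
    (∑ i ∈ Finset.univ.filter (fun i => hF.eigenvalues i < 0),
        (hF.eigenvalues i) ^ 2) ≤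
      sInf {s : ℝ | ∃ D' : Matrix (Fin N) (Fin N) ℝ, IsEDM D' ∧ s = frobSq (D - D')} := by
  apply le_csInf
  · refine ⟨frobSq (D - 0), 0, ⟨?_, ?_, ?_, ?_⟩, rfl⟩
    · simp [Matrix.IsSymm]
    · simp
    · simp
    · simpa using Matrix.PosSemidef.zero (n := Fin N) (R := ℝ)
  · rintro s ⟨D', hEDM, rfl⟩
    have h1 : frobSq (centerM N * (D - D') * centerM N) ≤ frobSq (D - D') := by
      calc frobSq (centerM N * (D - D') * centerM N)
          = frobSq (centerM N * ((D - D') * centerM N)) := by rw [Matrix.mul_assoc]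
        _ ≤ frobSq ((D - D') * centerM N) := frobSq_center_mul_le _
        _ ≤ frobSq (D - D') := frobSq_mul_center_le _
    have h2 : centerM N * (D - D') * centerM N =
        (-(centerM N * D' * centerM N)) - (-(centerM N * D * centerM N)) := by
      simp only [Matrix.sub_mul, Matrix.mul_sub]
      abel
    have h3 := pos_part_bound (-(centerM N * D * centerM N)) (-(centerM N * D' * centerM N))
      hF hEDM.2.2.2
    rw [← h2] at h3
    exact h3.trans h1
end

section
/- An N×N matrix D is a Euclidean distance matrix (i.e., there exist points x_1,…,x_N ∈ R^d for some d with D_{ij} = ‖x_i − x_j‖²) if and only if D is symmetric, hollow, entrywise nonnegative, and F = −JDJ is positive semidefinite, where J = I_N − (1/N)·1_N 1_N^T. -/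
open Matrix

lemma onesM_mul_s15 {N : ℕ} (A : Matrix (Fin N) (Fin N) ℝ) (i j : Fin N) :
    (onesM N * A) i j = ∑ k, A k j := by
  simp [onesM, mul_apply]

lemma mul_onesM {N : ℕ} (A : Matrix (Fin N) (Fin N) ℝ) (i j : Fin N) :
    (A * onesM N) i j = ∑ k, A i k := by
  simp [onesM, mul_apply]

lemma center_expand {N : ℕ} (A : Matrix (Fin N) (Fin N) ℝ) :
    centerM N * A * centerM N =
      A - (N : ℝ)⁻¹ • (onesM N * A) - (N : ℝ)⁻¹ • (A * onesM N)
        + ((N : ℝ)⁻¹ * (N : ℝ)⁻¹) • (onesM N * A * onesM N) := by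
  simp only [centerM, avgM, Matrix.smul_mul, Matrix.mul_smul, sub_mul, mul_sub, one_mul, mul_one,
    smul_smul, smul_sub]
  abel

lemma center_apply {N : ℕ} (A : Matrix (Fin N) (Fin N) ℝ) (i j : Fin N) :
    (centerM N * A * centerM N) i j =
      A i j - (N : ℝ)⁻¹ * (∑ k, A k j) - (N : ℝ)⁻¹ * (∑ k, A i k)
        + (N : ℝ)⁻¹ * ((N : ℝ)⁻¹ * ∑ k, ∑ l, A k l) := by
  rw [center_expand]
  simp only [Matrix.add_apply, Matrix.sub_apply, Matrix.smul_apply, smul_eq_mul,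
    onesM_mul_s15, mul_onesM]
  rw [show (∑ x : Fin N, ∑ k : Fin N, A k x) = ∑ k, ∑ l, A k l from Finset.sum_comm]
  ring

lemma centerM_symm {N : ℕ} : (centerM N)ᵀ = centerM N := by
  ext i j
  simp [centerM, avgM, onesM, Matrix.one_apply, eq_comm]

/-- Gower criterion: `D` is a Euclidean distance matrix (pairwise squared
    Euclidean distances of some points) iff `D` is symmetric, hollow,
    entrywise nonnegative, and `F = −JDJ` is positive semidefinite. -/
theorem edm_iff_gower {N : ℕ} (D : Matrix (Fin N) (Fin N) ℝ) :
    (∃ (d : ℕ) (x : Fin N → EuclideanSpace ℝ (Fin d)),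
        ∀ i j, D i j = ‖x i - x j‖ ^ 2) ↔
      (D.IsSymm ∧ (∀ i, D i i = 0) ∧ (∀ i j, 0 ≤ D i j) ∧
        (-(centerM N * D * centerM N)).PosSemidef) := by
  constructor
  · rintro ⟨d, x, hx⟩
    have hsym : D.IsSymm := by
      ext i j
      simp only [Matrix.transpose_apply, hx, norm_sub_rev]
    have hhol : ∀ i, D i i = 0 := fun i => by simp [hx]
    have hnn : ∀ i j, 0 ≤ D i j := fun i j => by rw [hx]; positivity
    refine ⟨hsym, hhol, hnn, Matrix.PosSemidef.of_dotProduct_mulVec_nonneg ?_ ?_⟩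
    · -- Hermitian
      have h : (centerM N * D * centerM N)ᵀ = centerM N * D * centerM N := by
        rw [Matrix.transpose_mul, Matrix.transpose_mul, centerM_symm, hsym.eq]
        rw [Matrix.mul_assoc]
      rw [Matrix.IsHermitian, conjTranspose_eq_transpose_of_trivial, Matrix.transpose_neg, h]
    · intro v
      set w : Fin N → ℝ := centerM N *ᵥ v with hw
      have hquad : star v ⬝ᵥ (-(centerM N * D * centerM N)) *ᵥ v = -(w ⬝ᵥ D *ᵥ w) := by
        rw [Matrix.neg_mulVec, dotProduct_neg, neg_inj,
          show star v = v from rfl, ← Matrix.mulVec_mulVec, ← Matrix.mulVec_mulVec]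
        nth_rewrite 1 [dotProduct_mulVec]
        rw [← centerM_symm, Matrix.vecMul_transpose, centerM_symm]
      rw [hquad]
      -- sum of w is zero
      have hws : ∑ i, w i = 0 := by
        by_cases hN : (N : ℝ) = 0
        · have hN0 : N = 0 := by exact_mod_cast hN
          subst hN0; simp
        · simp only [hw, centerM, avgM, Matrix.sub_mulVec, Matrix.smul_mulVec,
            Matrix.one_mulVec, Pi.sub_apply, Pi.smul_apply, smul_eq_mul]
          rw [Finset.sum_sub_distrib]
          have honesv : ∀ i, (onesM N *ᵥ v) i = ∑ k, v k := by
            intro i; simp [onesM, Matrix.mulVec, dotProduct]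
          simp only [honesv]
          rw [← Finset.mul_sum, Finset.sum_const, Finset.card_univ, Fintype.card_fin,
            nsmul_eq_mul]
          field_simp
          ring
      set y : EuclideanSpace ℝ (Fin d) := ∑ i, w i • x i with hy
      have hD : ∀ i j, D i j = ‖x i‖ ^ 2 + ‖x j‖ ^ 2 - 2 * inner ℝ (x i) (x j) := by
        intro i j; rw [hx, norm_sub_sq_real]; ring
      have expand : w ⬝ᵥ D *ᵥ w
          = (∑ i, ∑ j, w i * w j * ‖x i‖ ^ 2) + (∑ i, ∑ j, w i * w j * ‖x j‖ ^ 2)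
            - 2 * ∑ i, ∑ j, w i * w j * inner ℝ (x i) (x j) := by
        simp only [dotProduct, Matrix.mulVec, Finset.mul_sum]
        rw [← Finset.sum_add_distrib, ← Finset.sum_sub_distrib]
        refine Finset.sum_congr rfl fun i _ => ?_
        rw [← Finset.sum_add_distrib, ← Finset.sum_sub_distrib]
        refine Finset.sum_congr rfl fun j _ => ?_
        rw [hD]; ring
      have h1 : (∑ i, ∑ j, w i * w j * ‖x i‖ ^ 2) = 0 := by
        have : ∀ i, ∑ j, w i * w j * ‖x i‖ ^ 2 = (w i * ‖x i‖ ^ 2) * ∑ j, w j := by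
          intro i
          rw [Finset.mul_sum]
          exact Finset.sum_congr rfl fun j _ => by ring
        simp [this, hws]
      have h2 : (∑ i, ∑ j, w i * w j * ‖x j‖ ^ 2) = 0 := by
        have : ∀ i, ∑ j, w i * w j * ‖x j‖ ^ 2 = w i * ∑ j, w j * ‖x j‖ ^ 2 := by
          intro i
          rw [Finset.mul_sum]
          exact Finset.sum_congr rfl fun j _ => by ring
        simp only [this, ← Finset.sum_mul, hws, zero_mul]
      have h3 : (∑ i, ∑ j, w i * w j * inner ℝ (x i) (x j)) = ‖y‖ ^ 2 := by
        rw [← real_inner_self_eq_norm_sq, hy, sum_inner]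
        refine Finset.sum_congr rfl fun i _ => ?_
        rw [real_inner_smul_left, inner_sum, Finset.mul_sum]
        refine Finset.sum_congr rfl fun j _ => ?_
        rw [real_inner_smul_right]; ring
      rw [expand, h1, h2, h3]
      nlinarith [sq_nonneg ‖y‖]
  · rintro ⟨hsym, hhol, hnn, hpsd⟩
    set F := -(centerM N * D * centerM N) with hF
    have hpsd2 : ((2 : ℝ)⁻¹ • F).PosSemidef := by
      refine Matrix.PosSemidef.of_dotProduct_mulVec_nonneg ?_ ?_
      · rw [Matrix.IsHermitian, conjTranspose_smul]
        rw [hpsd.1]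
        norm_num
      · intro y
        rw [Matrix.smul_mulVec, dotProduct_smul, smul_eq_mul]
        exact mul_nonneg (by norm_num) (hpsd.dotProduct_mulVec_nonneg y)
    open scoped MatrixOrder in obtain ⟨B, hB⟩ := CStarAlgebra.nonneg_iff_eq_star_mul_self.mp hpsd2.nonneg
    rw [star_eq_conjTranspose] at hB
    set x : Fin N → EuclideanSpace ℝ (Fin N) :=
      fun i => (WithLp.equiv 2 (Fin N → ℝ)).symm (fun k => B k i) with hxdef
    refine ⟨N, x, ?_⟩
    intro i j
    have hinner : ∀ a b : Fin N, inner ℝ (x a) (x b) = (2 : ℝ)⁻¹ * F a b := by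
      intro a b
      have h : ((2 : ℝ)⁻¹ • F) a b = (Bᴴ * B) a b := by rw [← hB]
      rw [Matrix.smul_apply, smul_eq_mul] at h
      rw [h]
      simp [hxdef, PiLp.inner_apply, RCLike.inner_apply, Matrix.mul_apply,
        Matrix.conjTranspose_apply, WithLp.equiv_symm_apply, PiLp.toLp_apply]
      exact Finset.sum_congr rfl fun k _ => mul_comm _ _
    rw [norm_sub_sq_real, ← real_inner_self_eq_norm_sq, ← real_inner_self_eq_norm_sq,
      hinner, hinner, hinner]
    have hFentry : ∀ a b : Fin N, F a b =
        -(D a b) + (N : ℝ)⁻¹ * (∑ k, D k b) + (N : ℝ)⁻¹ * (∑ k, D a k)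
          - (N : ℝ)⁻¹ * ((N : ℝ)⁻¹ * ∑ k, ∑ l, D k l) := by
      intro a b
      rw [hF, Matrix.neg_apply, center_apply]; ring
    have hrowcol : ∀ a : Fin N, (∑ k, D k a) = ∑ k, D a k :=
      fun a => Finset.sum_congr rfl fun k _ => hsym.apply a k
    rw [hFentry, hFentry, hFentry, hrowcol i, hrowcol j, hhol i, hhol j]
    ring
end
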